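/- arXiv:1402.4316 — 4 statements merged into one kernel-verified Lean document; each statement's English description precedes it below -/
import Mathlib

section
/- For any 0 < z < 1, the distribution function F(-z,x) defined by F(-z,x) = exp(-(1-zx)^{1/z}) for x < 1/z and F(-z,x) = 1 for x ≥ 1/z satisfies sup_{x ∈ ℝ} |F(-z,x) - Λ(x)| ≤ z/e, where Λ(x) = exp(-exp(-x)). -/
set_option maxHeartbeats 1000000

open Real

lemma le_exp_sub_one (t : ℝ) : t ≤ Real.exp (t - 1) := by
  have := Real.add_one_le_exp (t - 1); linarith

lemma texp_le (t : ℝ) : t * Real.exp (-t) ≤ Real.exp (-1) := by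
  have h := le_exp_sub_one t
  have h2 : t * Real.exp (-t) ≤ Real.exp (t-1) * Real.exp (-t) := by
    have := Real.exp_pos (-t); nlinarith
  calc t * Real.exp (-t) ≤ Real.exp (t-1) * Real.exp (-t) := h2
    _ = Real.exp (-1) := by rw [← Real.exp_add]; ring_nf

lemma exp_sq_ge (s : ℝ) (hs : 0 ≤ s) : 1 + s + s^2/4 ≤ Real.exp s := by
  have h := Real.add_one_le_exp (s/2)
  have hh : Real.exp (s/2) * Real.exp (s/2) = Real.exp s := by
    rw [← Real.exp_add]; ring_nf
  nlinarith [Real.exp_pos (s/2)]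

lemma exp_le_quad {l : ℝ} (h0 : 0 ≤ l) (h1 : l ≤ 1) : Real.exp l ≤ 1 + l + l^2 := by
  have h := Real.exp_bound (x := l) (by rw [abs_of_nonneg h0]; exact h1) (n := 2) (by norm_num)
  have hs : ∑ i ∈ Finset.range 2, l ^ i / (Nat.factorial i : ℝ) = 1 + l := by
    simp [Finset.sum_range_succ]
  rw [hs, abs_of_nonneg h0] at h
  have h2 := (abs_le.1 h).2
  have h3 : ((Nat.succ 2 : ℕ) : ℝ) / ((Nat.factorial 2 : ℕ) * (2:ℕ)) = 3/4 := by
    norm_num [Nat.factorial]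
  rw [h3] at h2
  nlinarith [sq_nonneg l]

lemma exp_neg_le (p : ℝ) (hp0 : 0 < p) : Real.exp (-p) ≤ Real.exp (-1) / p := by
  rw [le_div_iff₀ hp0]
  calc Real.exp (-p) * p = p * Real.exp (-p) := by ring
    _ ≤ Real.exp (-1) := texp_le p

lemma phi_bound {p : ℝ} (hp : 1 ≤ p) {v : ℝ} (hv : v ∈ Set.Icc (0:ℝ) 1) :
    Real.exp (p * (v - 1)) - v ^ p ≤ Real.exp (-1) / p := by
  have hp0 : (0:ℝ) < p := lt_of_lt_of_le one_pos hp
  set f : ℝ → ℝ := fun w => Real.exp (p * (w - 1)) - w ^ p with hf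
  have hcont : ContinuousOn f (Set.Icc 0 1) := by
    apply ContinuousOn.sub
    · exact (Real.continuous_exp.comp (by continuity)).continuousOn
    · intro w _
      exact (Real.continuousAt_rpow_const w p (Or.inr hp0.le)).continuousWithinAt
  obtain ⟨c, hc, hmax⟩ := isCompact_Icc.exists_isMaxOn
    (Set.nonempty_Icc.2 zero_le_one) hcont
  have hfv : f v ≤ f c := hmax hv
  have key : f c ≤ Real.exp (-1) / p := by
    rcases eq_or_lt_of_le hc.1 with h0 | h0
    · -- c = 0
      have hfc : f c = Real.exp (-p) := by
        simp only [hf, ← h0]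
        rw [Real.zero_rpow (by positivity)]
        ring_nf
      rw [hfc]
      exact exp_neg_le p hp0
    · rcases eq_or_lt_of_le hc.2 with h1 | h1
      · -- c = 1
        have hfc : f c = 0 := by simp [hf, h1, Real.one_rpow]
        rw [hfc]; positivity
      · -- interior
        have hloc : IsLocalMax f c := hmax.isLocalMax (Icc_mem_nhds h0 h1)
        have hd1 : HasDerivAt (fun w : ℝ => p * (w - 1)) p c := by
          simpa using ((hasDerivAt_id c).sub_const 1).const_mul p
        have hd2 : HasDerivAt (fun w : ℝ => Real.exp (p * (w - 1)))
            (Real.exp (p * (c - 1)) * p) c := hd1.exp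
        have hd3 : HasDerivAt (fun w : ℝ => w ^ p) (p * c ^ (p - 1)) c :=
          Real.hasDerivAt_rpow_const (Or.inr hp)
        have hdf : HasDerivAt f (Real.exp (p * (c - 1)) * p - p * c ^ (p - 1)) c :=
          hd2.sub hd3
        have heq := hloc.hasDerivAt_eq_zero hdf
        have heq2 : Real.exp (p * (c - 1)) = c ^ (p - 1) := by
          have h5 : p * (Real.exp (p * (c - 1)) - c ^ (p - 1)) = 0 := by linarith
          have := (mul_eq_zero.1 h5).resolve_left (ne_of_gt hp0)
          linarith
        have hcp : c ^ p = c ^ (p - 1) * c := by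
          rw [← Real.rpow_add_one (ne_of_gt h0) (p-1)]; ring_nf
        have hfc : f c = Real.exp (p * (c - 1)) * (1 - c) := by
          simp only [hf]
          rw [hcp, heq2]; ring
        have hkey : Real.exp (p * (c - 1)) * (1 - c) ≤ Real.exp (-1) / p := by
          have htt := texp_le (p * (1 - c))
          have hrw : Real.exp (-(p * (1 - c))) = Real.exp (p * (c - 1)) := by
            ring_nf
          rw [hrw] at htt
          rw [le_div_iff₀ hp0]
          calc Real.exp (p * (c - 1)) * (1 - c) * p
              = (p * (1 - c)) * Real.exp (p * (c - 1)) := by ring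
            _ ≤ Real.exp (-1) := htt
        rw [hfc]; exact hkey
  simpa [hf] using hfv.trans key

lemma log_le_div_e {p : ℝ} (hp : 0 < p) : Real.log p ≤ p / Real.exp 1 := by
  have h1 : 0 < p / Real.exp 1 := by positivity
  have h2 := Real.log_le_sub_one_of_pos h1
  rw [Real.log_div (ne_of_gt hp) (ne_of_gt (Real.exp_pos 1)), Real.log_exp] at h2
  linarith

lemma one_add_log_le_two_rpow {p : ℝ} (hp : 1 ≤ p) : 1 + Real.log p ≤ (2:ℝ) ^ p := by
  have hp0 : (0:ℝ) < p := lt_of_lt_of_le one_pos hp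
  have h1 : Real.log p ≤ p / Real.exp 1 := log_le_div_e hp0
  have he : (2.7182818283 : ℝ) < Real.exp 1 := Real.exp_one_gt_d9
  have hl2 : (0.6931471803 : ℝ) < Real.log 2 := Real.log_two_gt_d9
  have h2 : p / Real.exp 1 ≤ p * Real.log 2 := by
    rw [div_eq_mul_inv]
    apply mul_le_mul_of_nonneg_left _ hp0.le
    rw [inv_le_iff_one_le_mul₀ (Real.exp_pos 1)]
    nlinarith
  have h3 : p * Real.log 2 ≤ Real.exp (p * Real.log 2) - 1 := by
    have := Real.add_one_le_exp (p * Real.log 2); linarith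
  have h4 : (2:ℝ) ^ p = Real.exp (Real.log 2 * p) := Real.rpow_def_of_pos two_pos p
  rw [h4, mul_comm (Real.log 2) p]
  linarith

lemma exp_neg_le_of_log {p A : ℝ} (hp : 0 < p) (hA : 1 + Real.log p ≤ A) :
    Real.exp (-A) ≤ Real.exp (-1) / p := by
  have h1 : Real.exp (-A) ≤ Real.exp (-(1 + Real.log p)) := by
    apply Real.exp_le_exp.2; linarith
  have h2 : Real.exp (-(1 + Real.log p)) = Real.exp (-1) / p := by
    rw [show -(1 + Real.log p) = -1 - Real.log p by ring, Real.exp_sub, Real.exp_log hp]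
  linarith

lemma dneg_bound {p : ℝ} (hp : 1 ≤ p) {v : ℝ} (hv : v ∈ Set.Icc (1:ℝ) 2) :
    Real.exp (-(v ^ p)) - Real.exp (-Real.exp (p * (v - 1))) ≤ Real.exp (-1) / p := by
  have hp0 : (0:ℝ) < p := lt_of_lt_of_le one_pos hp
  set f : ℝ → ℝ := fun w => Real.exp (-(w ^ p)) - Real.exp (-Real.exp (p * (w - 1))) with hf
  have hcont : ContinuousOn f (Set.Icc 1 2) := by
    apply ContinuousOn.sub
    · intro w hw
      have hw0 : w ≠ 0 := by have := hw.1; intro h; rw [h] at this; linarith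
      exact ((Real.continuous_exp.continuousAt).comp
        ((Real.continuousAt_rpow_const w p (Or.inl hw0)).neg)).continuousWithinAt
    · exact (Real.continuous_exp.comp (by continuity)).continuousOn
  obtain ⟨c, hc, hmax⟩ := isCompact_Icc.exists_isMaxOn
    (Set.nonempty_Icc.2 one_le_two) hcont
  have hfv : f v ≤ f c := hmax hv
  have key : f c ≤ Real.exp (-1) / p := by
    rcases eq_or_lt_of_le hc.1 with h0 | h0
    · -- c = 1
      have hfc : f c = 0 := by simp [hf, ← h0, Real.one_rpow]
      rw [hfc]; positivity
    · rcases eq_or_lt_of_le hc.2 with h1 | h1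
      · -- c = 2
        have hfc : f c ≤ Real.exp (-((2:ℝ) ^ p)) := by
          simp only [hf, h1]
          have := Real.exp_pos (-Real.exp (p * (2 - 1)))
          linarith
        refine hfc.trans (exp_neg_le_of_log hp0 (one_add_log_le_two_rpow hp))
      · -- interior
        have hc0 : (0:ℝ) < c := lt_trans one_pos h0
        have hloc : IsLocalMax f c := hmax.isLocalMax (Icc_mem_nhds h0 h1)
        set A := c ^ p with hA
        set B := Real.exp (p * (c - 1)) with hB
        set q := c ^ (p - 1) with hq
        have hd3 : HasDerivAt (fun w : ℝ => w ^ p) (p * q) c :=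
          Real.hasDerivAt_rpow_const (Or.inr hp)
        have hdA : HasDerivAt (fun w : ℝ => Real.exp (-(w ^ p)))
            (Real.exp (-A) * (-(p * q))) c := (hd3.neg).exp
        have hd1 : HasDerivAt (fun w : ℝ => p * (w - 1)) p c := by
          simpa using ((hasDerivAt_id c).sub_const 1).const_mul p
        have hdB0 : HasDerivAt (fun w : ℝ => Real.exp (p * (w - 1))) (B * p) c := hd1.exp
        have hdB : HasDerivAt (fun w : ℝ => Real.exp (-Real.exp (p * (w - 1))))
            (Real.exp (-B) * (-(B * p))) c := (hdB0.neg).exp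
        have hdf : HasDerivAt f
            (Real.exp (-A) * (-(p * q)) - Real.exp (-B) * (-(B * p))) c := hdA.sub hdB
        have heq := hloc.hasDerivAt_eq_zero hdf
        have hcrit : q * Real.exp (-A) = B * Real.exp (-B) := by
          have h5 : p * (B * Real.exp (-B) - q * Real.exp (-A)) = 0 := by linarith
          have := (mul_eq_zero.1 h5).resolve_left (ne_of_gt hp0)
          linarith
        -- logs
        set l := Real.log c with hl
        set s := p * l with hs
        have hl0 : 0 < l := Real.log_pos h0
        have hl1 : l ≤ 1 := by
          have h2 : Real.log c < Real.log 2 := Real.log_lt_log hc0 h1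
          have := Real.log_two_lt_d9
          simp only [hl]; linarith
        have hs0 : 0 ≤ s := by positivity
        have hAe : A = Real.exp s := by
          rw [hA, Real.rpow_def_of_pos hc0, hs, mul_comm]
        have hqe : q = Real.exp ((p - 1) * l) := by
          rw [hq, Real.rpow_def_of_pos hc0, mul_comm]
        have hq0 : 0 < q := by rw [hqe]; exact Real.exp_pos _
        have hB0 : 0 < B := Real.exp_pos _
        have hA0 : 0 < A := by rw [hAe]; exact Real.exp_pos _
        have hlc : l ≤ c - 1 := by
          have := Real.log_le_sub_one_of_pos hc0; rw [← hl] at this; exact this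
        have hAB : A ≤ B := by
          rw [hAe, hB]
          apply Real.exp_le_exp.2
          rw [hs]
          nlinarith
        have hqA : q ≤ A := by
          rw [hqe, hAe]
          apply Real.exp_le_exp.2
          rw [hs]; nlinarith
        have hfc2 : f c = Real.exp (-A) * (1 - q / B) := by
          simp only [hf]
          have hBe : Real.exp (-B) = q * Real.exp (-A) / B := by
            field_simp [hcrit]
            linarith [hcrit]
          rw [hBe]; field_simp; ring
        set g := p * (c - 1) - (p - 1) * l with hg
        have h1q : 1 - q / B ≤ g := by
          have hqB0 : 0 < q / B := div_pos hq0 hB0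
          have h6 := Real.log_le_sub_one_of_pos hqB0
          have h7 : Real.log (q / B) = (p - 1) * l - p * (c - 1) := by
            rw [Real.log_div (ne_of_gt hq0) (ne_of_gt hB0), hqe, Real.log_exp, hB,
              Real.log_exp]
          rw [h7] at h6
          rw [hg]; linarith
        have hcl : c ≤ 1 + l + l ^ 2 := by
          have : c = Real.exp l := (Real.exp_log hc0).symm
          rw [this]; exact exp_le_quad hl0.le hl1
        clear hloc hd3 hdA hd1 hdB0 hdB hdf heq hcont hmax
        clear_value A B q l s g
        have hpg : p * g ≤ s ^ 2 + s := by
          have h8 : c - 1 - l ≤ l ^ 2 := by linarith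
          have : p * g = p ^ 2 * (c - 1 - l) + s := by rw [hg, hs]; ring
          rw [this]
          have h9 : p ^ 2 * (c - 1 - l) ≤ p ^ 2 * l ^ 2 := by nlinarith [sq_nonneg p]
          have h10 : p ^ 2 * l ^ 2 = s ^ 2 := by rw [hs]; ring
          linarith
        have hx : s + s ^ 2 / 4 ≤ A - 1 := by
          have := exp_sq_ge s hs0; rw [← hAe] at this; linarith
        have hx0 : 0 ≤ A - 1 := by nlinarith
        have hE := exp_sq_ge (A - 1) hx0
        have hsx0 : 0 ≤ s + s ^ 2 / 4 := by positivity
        have hxx : (s + s ^ 2 / 4) ^ 2 ≤ (A - 1) ^ 2 := by nlinarith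
        have hpoly : s ^ 2 + s ≤ 1 + (A - 1) + (A - 1) ^ 2 / 4 := by
          nlinarith [sq_nonneg (s * (s - 2)),
            mul_nonneg (by linarith : (0:ℝ) ≤ s + 1) (sq_nonneg (s - 2))]
        have hclaim : p * g ≤ Real.exp (A - 1) := by linarith
        have hfin : Real.exp (-A) * (1 - q / B) ≤ Real.exp (-1) / p := by
          have hEA : Real.exp (-A) * Real.exp (A - 1) = Real.exp (-1) := by
            rw [← Real.exp_add]; ring_nf
          have step1 : Real.exp (-A) * (1 - q / B) ≤ Real.exp (-A) * g :=
            mul_le_mul_of_nonneg_left h1q (Real.exp_pos (-A)).le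
          have step2 : Real.exp (-A) * g ≤ Real.exp (-1) / p := by
            rw [le_div_iff₀ hp0]
            calc Real.exp (-A) * g * p = Real.exp (-A) * (p * g) := by ring
              _ ≤ Real.exp (-A) * Real.exp (A - 1) :=
                  mul_le_mul_of_nonneg_left hclaim (Real.exp_pos (-A)).le
              _ = Real.exp (-1) := hEA
          linarith
        rw [hfc2]; exact hfin
  simpa [hf] using hfv.trans key

/-- The standard Gumbel distribution function. -/
noncomputable def Gumbel (x : ℝ) : ℝ := Real.exp (-Real.exp (-x))

/-- The reverse-Weibull-type generalized extreme value distribution function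
with parameter `-z`, `z > 0`. -/
noncomputable def GEVneg (z x : ℝ) : ℝ :=
  if x < 1 / z then Real.exp (-(1 - z * x) ^ (1 / z)) else 1

theorem stmt1 (z : ℝ) (hz0 : 0 < z) (hz1 : z < 1) :
    ∀ x : ℝ, |GEVneg z x - Gumbel x| ≤ z / Real.exp 1 := by
  intro x
  have hz0' : z ≠ 0 := ne_of_gt hz0
  set p := 1 / z with hp'
  have hp : 1 ≤ p := by rw [hp', le_div_iff₀ hz0]; linarith
  have hp0 : (0:ℝ) < p := lt_of_lt_of_le one_pos hp
  have hrhs : z / Real.exp 1 = Real.exp (-1) / p := by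
    rw [hp', Real.exp_neg]
    field_simp
  rw [hrhs]
  by_cases hx : x < 1 / z
  · -- x < 1/z
    set v := 1 - z * x with hv
    have hv0 : 0 < v := by
      have h1 : z * x < 1 := by
        have := (lt_div_iff₀ hz0).1 hx
        linarith
      rw [hv]; linarith
    have hGE : GEVneg z x = Real.exp (-(v ^ p)) := by
      simp only [GEVneg, ← hv, ← hp', if_pos (show x < p from hx)]
    have hb : p * (v - 1) = -x := by
      rw [hv, hp']; field_simp; ring
    have hGu : Gumbel x = Real.exp (-Real.exp (p * (v - 1))) := by
      rw [Gumbel, hb]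
    have hab : v ^ p ≤ Real.exp (p * (v - 1)) := by
      have h1 : v ≤ Real.exp (v - 1) := le_exp_sub_one v
      have h2 : v ^ p ≤ Real.exp (v - 1) ^ p :=
        Real.rpow_le_rpow hv0.le h1 hp0.le
      have h3 : Real.exp (v - 1) ^ p = Real.exp (p * (v - 1)) := by
        rw [Real.rpow_def_of_pos (Real.exp_pos _), Real.log_exp, mul_comm]
      linarith
    have hnn : 0 ≤ GEVneg z x - Gumbel x := by
      rw [hGE, hGu]
      have := Real.exp_le_exp.2 (neg_le_neg hab)
      linarith
    rw [abs_of_nonneg hnn, hGE, hGu]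
    rcases le_or_gt v 1 with hv1 | hv1
    · -- 0 < v ≤ 1
      have ha0 : 0 ≤ v ^ p := Real.rpow_nonneg hv0.le p
      have h3 : 1 - (Real.exp (p * (v - 1)) - v ^ p) ≤
          Real.exp (v ^ p - Real.exp (p * (v - 1))) := by
        have := Real.add_one_le_exp (v ^ p - Real.exp (p * (v - 1))); linarith
      have h4 : Real.exp (-(v ^ p)) * Real.exp (v ^ p - Real.exp (p * (v - 1)))
          = Real.exp (-Real.exp (p * (v - 1))) := by
        rw [← Real.exp_add]; ring_nf
      have h5 : Real.exp (-(v ^ p)) ≤ 1 := Real.exp_le_one_iff.2 (by linarith)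
      have h6 := phi_bound hp ⟨hv0.le, hv1⟩
      have h7 : Real.exp (-(v ^ p)) - Real.exp (-Real.exp (p * (v - 1))) ≤
          Real.exp (p * (v - 1)) - v ^ p := by
        nlinarith [Real.exp_pos (-(v ^ p)), Real.exp_pos (v ^ p - Real.exp (p * (v - 1)))]
      linarith
    · rcases le_or_gt v 2 with hv2 | hv2
      · exact dneg_bound hp ⟨hv1.le, hv2⟩
      · have h7 : (2:ℝ) ^ p ≤ v ^ p := Real.rpow_le_rpow (by norm_num) hv2.le hp0.le
        have h8 : Real.exp (-(v ^ p)) ≤ Real.exp (-1) / p := by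
          refine le_trans ?_ (exp_neg_le_of_log hp0 (one_add_log_le_two_rpow hp))
          exact Real.exp_le_exp.2 (by linarith)
        have := Real.exp_pos (-Real.exp (p * (v - 1)))
        linarith
  · -- x ≥ 1/z
    push_neg at hx
    have hGE : GEVneg z x = 1 := by
      simp only [GEVneg, if_neg (not_lt.2 hx)]
    have hGu1 : Gumbel x ≤ 1 := by
      rw [Gumbel]
      exact Real.exp_le_one_iff.2 (by
        have := Real.exp_pos (-x); linarith)
    have hGu2 : 1 - Real.exp (-x) ≤ Gumbel x := by
      rw [Gumbel]
      have := Real.add_one_le_exp (-Real.exp (-x)); linarith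
    have h9 : Real.exp (-x) ≤ Real.exp (-p) := by
      apply Real.exp_le_exp.2
      rw [hp']
      linarith
    have h10 := exp_neg_le p hp0
    rw [hGE, abs_of_nonneg (by linarith)]
    linarith
end

section
/- Let u be a differentiable positive function, let h be a nonincreasing positive function with |u′(t)| ≤ h(t) for all t, let a_n = u(b_n) > 0, and fix x > 0 with h(b_n)x < 1. Then 1/(1 + h(b_n)x) ≤ u(b_n)/u(a_n x + b_n) ≤ 1/(1 - h(b_n)x). -/
theorem stmt3 (u h : ℝ → ℝ) (b x : ℝ)
    (hu : Differentiable ℝ u) (hupos : ∀ t, 0 < u t)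
    (hhpos : ∀ t, 0 < h t) (hhmono : Antitone h)
    (hbound : ∀ t, |deriv u t| ≤ h t)
    (hx : 0 < x) (hsmall : h b * x < 1) :
    1 / (1 + h b * x) ≤ u b / u (u b * x + b) ∧
      u b / u (u b * x + b) ≤ 1 / (1 - h b * x) := by
  set c := u b * x + b with hc
  have hub := hupos b
  have hbc : b ≤ c := by nlinarith [mul_pos hub hx]
  have hconv : Convex ℝ (Set.Icc b c) := convex_Icc b c
  have hlip : ‖u c - u b‖ ≤ h b * ‖c - b‖ := by
    apply Convex.norm_image_sub_le_of_norm_deriv_le (fun t _ => hu t)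
      (fun t ht => ?_) hconv (Set.left_mem_Icc.2 hbc) (Set.right_mem_Icc.2 hbc)
    calc ‖deriv u t‖ ≤ h t := hbound t
      _ ≤ h b := hhmono ht.1
  have hcb : c - b = u b * x := by rw [hc]; ring
  rw [hcb, Real.norm_eq_abs, Real.norm_eq_abs,
    abs_of_pos (mul_pos hub hx)] at hlip
  have habs := abs_le.1 hlip
  have huc := hupos c
  have h1 : (0:ℝ) < 1 + h b * x := by nlinarith [hhpos b]
  have h2 : (0:ℝ) < 1 - h b * x := by linarith
  constructor
  · rw [div_le_div_iff₀ h1 huc]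
    nlinarith [habs.2]
  · rw [div_le_div_iff₀ huc h2]
    nlinarith [habs.1]
end

section
/- Let u be a differentiable positive function, h positive and nonincreasing with |u′(t)| ≤ h(t), a_n = u(b_n) > 0, and let x < 0 satisfy h(a_n x + b_n)|x| < 1. Then 1/(1 + h(a_n x + b_n)|x|) ≤ u(b_n)/u(a_n x + b_n) ≤ 1/(1 - h(a_n x + b_n)|x|). -/
theorem stmt4 (u h : ℝ → ℝ) (b x : ℝ)
    (hu : Differentiable ℝ u) (hupos : ∀ t, 0 < u t)
    (hhpos : ∀ t, 0 < h t) (hhmono : Antitone h)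
    (hbound : ∀ t, |deriv u t| ≤ h t)
    (hx : x < 0) (hsmall : h (u b * x + b) * |x| < 1) :
    1 / (1 + h (u b * x + b) * |x|) ≤ u b / u (u b * x + b) ∧
      u b / u (u b * x + b) ≤ 1 / (1 - h (u b * x + b) * |x|) := by
  set y := u b * x + b with hy
  set c := h y * |x| with hc
  have hyb : y ≤ b := by
    have : u b * x < 0 := mul_neg_of_pos_of_neg (hupos b) hx
    simp [hy]; linarith
  have key : |u b - u y| ≤ h y * (b - y) := by
    have := norm_image_sub_le_of_norm_deriv_le_segment' (a := y) (b := b)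
      (f := u) (f' := deriv u)
      (fun t _ => (hu t).hasDerivAt.hasDerivWithinAt)
      (fun t ht => (hbound t).trans (hhmono ht.1))
      b (Set.right_mem_Icc.2 hyb)
    simpa using this
  have hby : b - y = u b * |x| := by
    rw [abs_of_neg hx, hy]; ring
  rw [hby] at key
  have key' : |u b - u y| ≤ c * u b := by rw [hc]; nlinarith [key]
  have h1 : u y ≤ (1 + c) * u b := by
    have := abs_le.1 key'
    nlinarith [this.1]
  have h2 : (1 - c) * u b ≤ u y := by
    have := abs_le.1 key'
    nlinarith [this.2]
  have hcpos : 0 < c := mul_pos (hhpos y) (abs_pos.2 (ne_of_lt hx))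
  have huy : 0 < u y := hupos y
  have hub : 0 < u b := hupos b
  constructor
  · rw [div_le_div_iff₀ (by linarith) huy]
    nlinarith
  · rw [div_le_div_iff₀ huy (by linarith)]
    nlinarith
end

section
/- Suppose g_n → λ uniformly on ℝ, where λ is the Gumbel density, and suppose ∫|g_n − λ|^{β−1} ≤ M for all large n and some β > 1, M > 0. Then H_β(g_n) → H_β(λ), and moreover |H_β(g_n) − H_β(λ)| = O(sup_x |g_n(x) − λ(x)|). -/
open Real MeasureTheory Filter

/-- The Rényi entropy of order `β` of a density `f` on `ℝ`. -/
noncomputable def renyiEntropy (β : ℝ) (f : ℝ → ℝ) : ℝ :=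
  (1 / (1 - β)) * Real.log (∫ x : ℝ, f x ^ β)

/-- The standard Gumbel density. -/
noncomputable def gumbelPDF (x : ℝ) : ℝ := Real.exp (-x - Real.exp (-x))

open Set intervalIntegral Topology

lemma gumbel_pos (x : ℝ) : 0 < gumbelPDF x := Real.exp_pos _

lemma gumbel_cont : Continuous gumbelPDF := by
  unfold gumbelPDF; fun_prop

lemma two_mul_le_exp (t : ℝ) : 2 * t ≤ Real.exp t := by
  have h := Real.add_one_le_exp (t / 2)
  have h2 : Real.exp (t / 2) * Real.exp (t / 2) = Real.exp t := by
    rw [← Real.exp_add]; ring_nf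
  nlinarith [Real.exp_pos (t / 2), sq_nonneg (t / 2 - 1)]

lemma gumbel_le (x : ℝ) : gumbelPDF x ≤ Real.exp (-|x|) := by
  unfold gumbelPDF
  apply Real.exp_le_exp.2
  rcases abs_cases x with ⟨h1, h2⟩ | ⟨h1, h2⟩
  · rw [h1]; nlinarith [Real.exp_pos (-x)]
  · rw [h1]
    have := two_mul_le_exp (-x)
    linarith

lemma gumbel_le_one (x : ℝ) : gumbelPDF x ≤ 1 :=
  (gumbel_le x).trans (Real.exp_le_one_iff.2 (neg_nonpos.2 (abs_nonneg x)))

lemma integrable_exp_neg_abs {p : ℝ} (hp : 0 < p) :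
    Integrable (fun x : ℝ => Real.exp (-(p * |x|))) := by
  have h1 : IntegrableOn (fun x : ℝ => Real.exp (-(p * |x|))) (Ici 0) := by
    rw [integrableOn_Ici_iff_integrableOn_Ioi]
    exact (exp_neg_integrableOn_Ioi 0 hp).congr_fun
      (fun x hx => by rw [abs_of_pos hx]; ring_nf) measurableSet_Ioi
  have h2 : IntegrableOn (fun x : ℝ => Real.exp (-(p * |x|))) (Iio 0) := by
    have h3 := (MeasurePreserving.integrableOn_comp_preimage
      (Measure.measurePreserving_neg (volume : Measure ℝ))
      (Homeomorph.neg ℝ).measurableEmbedding).2 h1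
    have h4 : ((fun x : ℝ => Real.exp (-(p * |x|))) ∘ Neg.neg) =
        fun x : ℝ => Real.exp (-(p * |x|)) := by
      funext x; simp [Function.comp, abs_neg]
    have h5 : (Neg.neg ⁻¹' Ici (0 : ℝ)) = Iic 0 := by
      ext x; simp
    rw [h4, h5] at h3
    exact h3.mono_set Iio_subset_Iic_self
  rw [← integrableOn_univ, ← Set.Iio_union_Ici (a := (0 : ℝ))]
  exact h2.union h1

lemma integrable_gumbel_rpow {p : ℝ} (hp : 0 < p) :
    Integrable (fun x => gumbelPDF x ^ p) := by
  apply Integrable.mono' (integrable_exp_neg_abs hp)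
  · exact (gumbel_cont.rpow_const fun x => Or.inl (gumbel_pos x).ne').aestronglyMeasurable
  · refine ae_of_all _ fun x => ?_
    rw [Real.norm_eq_abs, abs_of_nonneg (Real.rpow_nonneg (gumbel_pos x).le _)]
    calc gumbelPDF x ^ p ≤ (Real.exp (-|x|)) ^ p :=
          Real.rpow_le_rpow (gumbel_pos x).le (gumbel_le x) hp.le
      _ = Real.exp (-(p * |x|)) := by rw [← Real.exp_mul]; ring_nf

lemma integrable_gumbel : Integrable gumbelPDF := by
  have := integrable_gumbel_rpow one_pos
  simpa [Real.rpow_one] using this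

lemma gumbel_hasDeriv (x : ℝ) :
    HasDerivAt (fun y => Real.exp (-Real.exp (-y))) (gumbelPDF x) x := by
  have h1 : HasDerivAt (fun y : ℝ => -Real.exp (-y)) (Real.exp (-x)) x := by
    have h0 := (Real.hasDerivAt_exp (-x)).comp x (hasDerivAt_neg x)
    simpa [Function.comp_def, Pi.neg_def] using h0.neg
  have h2 := (Real.hasDerivAt_exp (-Real.exp (-x))).comp x h1
  have h3 : Real.exp (-Real.exp (-x)) * Real.exp (-x) = gumbelPDF x := by
    rw [← Real.exp_add]; unfold gumbelPDF; ring_nf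
  simpa [h3, Function.comp_def] using h2

lemma intervalIntegral_gumbel (a b : ℝ) :
    ∫ x in a..b, gumbelPDF x = Real.exp (-Real.exp (-b)) - Real.exp (-Real.exp (-a)) :=
  intervalIntegral.integral_eq_sub_of_hasDerivAt (fun x _ => gumbel_hasDeriv x)
    (gumbel_cont.intervalIntegrable a b)

lemma integral_gumbel : ∫ x : ℝ, gumbelPDF x = 1 := by
  have h := intervalIntegral_tendsto_integral (μ := volume) (l := atTop)
    (a := fun T : ℝ => -T) (b := fun T : ℝ => T) integrable_gumbel
    tendsto_neg_atTop_atBot tendsto_id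
  have h2 : Tendsto (fun T : ℝ => ∫ x in (-T)..T, gumbelPDF x) atTop (𝓝 1) := by
    simp_rw [intervalIntegral_gumbel]
    have l1 : Tendsto (fun T : ℝ => Real.exp (-Real.exp (-T))) atTop (𝓝 1) := by
      have e1 : Tendsto (fun T : ℝ => -Real.exp (-T)) atTop (𝓝 0) := by
        simpa using (Real.tendsto_exp_atBot.comp tendsto_neg_atTop_atBot).neg
      simpa [Function.comp_def] using (Real.continuous_exp.tendsto 0).comp e1
    have l2 : Tendsto (fun T : ℝ => Real.exp (-Real.exp (-(-T)))) atTop (𝓝 0) := by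
      simp only [neg_neg]
      exact Real.tendsto_exp_atBot.comp (tendsto_neg_atTop_atBot.comp Real.tendsto_exp_atTop)
    simpa using l1.sub l2
  exact tendsto_nhds_unique h h2

lemma gumbel_interval_ge {T : ℝ} (_hT : 0 ≤ T) :
    1 - 2 * Real.exp (-T) ≤ ∫ x in (-T)..T, gumbelPDF x := by
  rw [intervalIntegral_gumbel]
  have h1 : 1 - Real.exp (-T) ≤ Real.exp (-Real.exp (-T)) := by
    have := Real.add_one_le_exp (-Real.exp (-T)); linarith
  have h2 : Real.exp (-Real.exp (-(-T))) ≤ Real.exp (-T) := by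
    apply Real.exp_le_exp.2
    simp only [neg_neg, neg_le_neg_iff]
    linarith [Real.add_one_le_exp T]
  linarith

lemma rpow_sub_rpow_le {a b p : ℝ} (hb : 0 ≤ b) (hba : b ≤ a) (hp : 1 ≤ p) :
    a ^ p - b ^ p ≤ p * a ^ (p - 1) * (a - b) := by
  have ha : 0 ≤ a := hb.trans hba
  rcases ha.eq_or_lt with ha0 | ha0
  · have hb0 : b = 0 := le_antisymm (ha0 ▸ hba) hb
    simp [← ha0, hb0, Real.zero_rpow (by intro h; rw [h] at hp; linarith : p ≠ 0)]
  · have key := one_add_mul_self_le_rpow_one_add (s := b / a - 1) (by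
      have : 0 ≤ b / a := div_nonneg hb ha0.le
      linarith) hp
    have e1 : (1 : ℝ) + (b / a - 1) = b / a := by ring
    rw [e1, Real.div_rpow hb ha0.le] at key
    have hap : (0 : ℝ) < a ^ p := Real.rpow_pos_of_pos ha0 _
    have h2 := mul_le_mul_of_nonneg_left key hap.le
    rw [mul_div_cancel₀ _ hap.ne'] at h2
    have e2 : a ^ p = a ^ (p - 1) * a := by
      rw [← Real.rpow_add_one ha0.ne' (p - 1)]; ring_nf
    have e3 : a ^ p * (1 + p * (b / a - 1))
        = a ^ p + p * (a ^ (p - 1) * b) - p * (a ^ (p - 1) * a) := by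
      rw [e2]; field_simp; ring
    rw [e3, ← e2] at h2
    nlinarith [h2]

lemma abs_rpow_sub_rpow_le {a b p ε : ℝ} (ha : 0 ≤ a) (hb : 0 ≤ b) (hp : 1 ≤ p)
    (hab : |a - b| ≤ ε) :
    |a ^ p - b ^ p| ≤ p * (b + ε) ^ (p - 1) * |a - b| := by
  have hε : 0 ≤ ε := (abs_nonneg _).trans hab
  have hp0 : (0 : ℝ) < p := by linarith
  rcases le_total b a with h | h
  · have hle : a ≤ b + ε := by
      have := (abs_le.1 hab).2; linarith
    rw [abs_of_nonneg (sub_nonneg.2 (Real.rpow_le_rpow hb h hp0.le)),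
      abs_of_nonneg (sub_nonneg.2 h)]
    refine (rpow_sub_rpow_le hb h hp).trans ?_
    have h1 : a ^ (p - 1) ≤ (b + ε) ^ (p - 1) :=
      Real.rpow_le_rpow ha hle (by linarith)
    have h2 : 0 ≤ a - b := sub_nonneg.2 h
    have := mul_le_mul_of_nonneg_right (mul_le_mul_of_nonneg_left h1 hp0.le) h2
    linarith
  · have hle : b ≤ b + ε := by linarith
    rw [abs_sub_comm, abs_sub_comm a b] at *
    rw [abs_of_nonneg (sub_nonneg.2 (Real.rpow_le_rpow ha h hp0.le)),
      abs_of_nonneg (sub_nonneg.2 h)]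
    refine (rpow_sub_rpow_le ha h hp).trans ?_
    have h1 : b ^ (p - 1) ≤ (b + ε) ^ (p - 1) :=
      Real.rpow_le_rpow hb hle (by linarith)
    have h2 : 0 ≤ b - a := sub_nonneg.2 h
    have := mul_le_mul_of_nonneg_right (mul_le_mul_of_nonneg_left h1 hp0.le) h2
    linarith

lemma add_rpow_le {a b p : ℝ} (ha : 0 ≤ a) (hb : 0 ≤ b) (hp : 0 ≤ p) :
    (a + b) ^ p ≤ 2 ^ p * (a ^ p + b ^ p) := by
  rcases le_total a b with h | h
  · calc (a + b) ^ p ≤ (2 * b) ^ p :=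
          Real.rpow_le_rpow (by linarith) (by linarith) hp
      _ = 2 ^ p * b ^ p := Real.mul_rpow (by norm_num) hb
      _ ≤ 2 ^ p * (a ^ p + b ^ p) := by
          have := Real.rpow_nonneg ha p
          have h2 : (0:ℝ) ≤ 2 ^ p := Real.rpow_nonneg (by norm_num) p
          nlinarith
  · calc (a + b) ^ p ≤ (2 * a) ^ p :=
          Real.rpow_le_rpow (by linarith) (by linarith) hp
      _ = 2 ^ p * a ^ p := Real.mul_rpow (by norm_num) ha
      _ ≤ 2 ^ p * (a ^ p + b ^ p) := by
          have := Real.rpow_nonneg hb p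
          have h2 : (0:ℝ) ≤ 2 ^ p := Real.rpow_nonneg (by norm_num) p
          nlinarith

lemma abs_log_sub_log_le {a b : ℝ} (ha : 0 < a) (hb : 0 < b) :
    |Real.log a - Real.log b| ≤ |a - b| / min a b := by
  have key : ∀ x y : ℝ, 0 < x → 0 < y →
      Real.log x - Real.log y ≤ |x - y| / min x y := by
    intro x y hx hy
    have h1 : Real.log x - Real.log y = Real.log (x / y) :=
      (Real.log_div hx.ne' hy.ne').symm
    have h2 : Real.log (x / y) ≤ x / y - 1 :=
      Real.log_le_sub_one_of_pos (div_pos hx hy)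
    have h3 : x / y - 1 = (x - y) / y := by field_simp
    rcases le_total x y with h | h
    · have h4 : (x - y) / y ≤ 0 := div_nonpos_of_nonpos_of_nonneg (by linarith) hy.le
      have h5 : 0 ≤ |x - y| / min x y := by positivity
      linarith
    · have h4 : (x - y) / y ≤ (x - y) / min x y :=
        div_le_div_of_nonneg_left (by linarith) (lt_min hx hy) (min_le_right x y)
      have h5 : (x - y) / min x y ≤ |x - y| / min x y :=
        (div_le_div_iff_of_pos_right (lt_min hx hy)).2 (le_abs_self _)
      linarith
  rw [abs_sub_le_iff]
  constructor
  · exact key a b ha hb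
  · have := key b a hb ha
    rwa [abs_sub_comm, min_comm] at this

lemma l1_bound {g : ℝ → ℝ} {ε : ℝ} (hg0 : ∀ x, 0 ≤ g x) (hgi : Integrable g)
    (hg1 : ∫ x : ℝ, g x = 1) (hε : 0 < ε) (hε1 : ε < 1)
    (hclose : ∀ x, |g x - gumbelPDF x| ≤ ε) :
    ∫ x : ℝ, |g x - gumbelPDF x| ≤ 4 * ε * (1 - Real.log ε) := by
  set T : ℝ := -Real.log ε with hT
  have hT0 : 0 < T := by
    rw [hT]; simp only [neg_pos]; exact Real.log_neg hε hε1
  have heT : Real.exp (-T) = ε := by rw [hT, neg_neg, Real.exp_log hε]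
  set s : Set ℝ := Ioc (-T) T with hs
  have hms : MeasurableSet s := measurableSet_Ioc
  have hvol : (volume s).toReal = 2 * T := by
    rw [hs, Real.volume_Ioc, ENNReal.toReal_ofReal (by linarith)]; ring
  have hdint : Integrable (fun x => |g x - gumbelPDF x|) := (hgi.sub integrable_gumbel).abs
  -- inner part
  have hA : ∫ x in s, |g x - gumbelPDF x| ≤ ε * (2 * T) := by
    have h := norm_setIntegral_le_of_norm_le_const (μ := volume) (s := s)
      (f := fun x => |g x - gumbelPDF x|) (C := ε)
      (by rw [hs, Real.volume_Ioc]; exact ENNReal.ofReal_lt_top)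
      (fun x _ => by rw [Real.norm_eq_abs, abs_abs]; exact hclose x)
    rw [measureReal_def, hvol, Real.norm_eq_abs] at h
    exact (le_abs_self _).trans h
  -- lower bound for ∫_s gumbelPDF
  have hlam_s : 1 - 2 * ε ≤ ∫ x in s, gumbelPDF x := by
    have := gumbel_interval_ge hT0.le
    rwa [intervalIntegral.integral_of_le (by linarith : -T ≤ T), heT] at this
  -- lower bound for ∫_s g
  have hvol_lt : volume s < ⊤ := by
    rw [hs, Real.volume_Ioc]; exact ENNReal.ofReal_lt_top
  have hconst : IntegrableOn (fun _ : ℝ => ε) s := by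
    apply integrableOn_const hvol_lt.ne
  have hg_s : 1 - 2 * ε - 2 * T * ε ≤ ∫ x in s, g x := by
    have hmono : ∫ x in s, (gumbelPDF x - ε) ≤ ∫ x in s, g x := by
      apply setIntegral_mono_on
        (integrable_gumbel.integrableOn.sub hconst) hgi.integrableOn hms
      intro x _
      simp only [Pi.sub_apply]
      have := (abs_le.1 (hclose x)).1
      linarith
    have hsplit : ∫ x in s, (gumbelPDF x - ε)
        = (∫ x in s, gumbelPDF x) - (volume s).toReal * ε := by
      rw [integral_sub integrable_gumbel.integrableOn hconst,
        setIntegral_const, smul_eq_mul, measureReal_def]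
    rw [hsplit, hvol] at hmono
    linarith
  -- outer part
  have hcompl_g : ∫ x in sᶜ, g x ≤ 2 * ε + 2 * T * ε := by
    have := integral_add_compl hms hgi
    rw [hg1] at this
    linarith
  have hcompl_lam : ∫ x in sᶜ, gumbelPDF x ≤ 2 * ε := by
    have := integral_add_compl hms integrable_gumbel
    rw [integral_gumbel] at this
    linarith
  have hB : ∫ x in sᶜ, |g x - gumbelPDF x| ≤ 4 * ε + 2 * T * ε := by
    have hmono : ∫ x in sᶜ, |g x - gumbelPDF x| ≤ ∫ x in sᶜ, (g x + gumbelPDF x) := by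
      apply setIntegral_mono_on hdint.integrableOn
        ((hgi.add integrable_gumbel).integrableOn) hms.compl
      intro x _
      have h1 := abs_sub_abs_le_abs_sub (g x) (gumbelPDF x)
      have := abs_sub (g x) (gumbelPDF x)
      calc |g x - gumbelPDF x| ≤ |g x| + |gumbelPDF x| := abs_sub _ _
        _ = g x + gumbelPDF x := by
            rw [abs_of_nonneg (hg0 x), abs_of_nonneg (gumbel_pos x).le]
    have hadd : ∫ x in sᶜ, (g x + gumbelPDF x)
        = (∫ x in sᶜ, g x) + ∫ x in sᶜ, gumbelPDF x :=
      integral_add hgi.integrableOn integrable_gumbel.integrableOn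
    rw [hadd] at hmono
    linarith
  have htotal := integral_add_compl hms hdint
  have : ∫ x : ℝ, |g x - gumbelPDF x| ≤ ε * (2 * T) + (4 * ε + 2 * T * ε) := by
    rw [← htotal]; exact add_le_add hA hB
  have hTlog : T = -Real.log ε := hT
  nlinarith [this]

lemma gumbel_rpow_integral_pos {p : ℝ} (hp : 0 < p) :
    0 < ∫ x : ℝ, gumbelPDF x ^ p := by
  rw [integral_pos_iff_support_of_nonneg_ae
    (ae_of_all _ fun x => Real.rpow_nonneg (gumbel_pos x).le p) (integrable_gumbel_rpow hp)]
  have hsupp : Function.support (fun x : ℝ => gumbelPDF x ^ p) = Set.univ := by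
    ext x
    simp [Function.mem_support, (Real.rpow_pos_of_pos (gumbel_pos x) p).ne']
  rw [hsupp, Real.volume_univ]
  exact ENNReal.zero_lt_top

lemma main_estimate {g : ℝ → ℝ} {β ε : ℝ} (hβ : 1 < β) (hg0 : ∀ x, 0 ≤ g x)
    (hgi : Integrable g) (hg1 : ∫ x : ℝ, g x = 1) (hε : 0 < ε) (hε1 : ε < 1)
    (hclose : ∀ x, |g x - gumbelPDF x| ≤ ε) :
    |(∫ x : ℝ, g x ^ β) - ∫ x : ℝ, gumbelPDF x ^ β|
      ≤ (β * 2 ^ (β - 1) * ((∫ x : ℝ, gumbelPDF x ^ (β - 1)) + 4 + 4 / (β - 1))) * ε := by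
  have hb1 : 0 < β - 1 := by linarith
  have hβ0 : (0 : ℝ) < β := by linarith
  have hg2 : ∀ x, g x ≤ 2 := by
    intro x
    have h1 := (abs_le.1 (hclose x)).2
    have h2 := gumbel_le_one x
    linarith
  have hmeas : AEStronglyMeasurable (fun x => g x ^ β) volume :=
    (Real.continuous_rpow_const hβ0.le).comp_aestronglyMeasurable hgi.aestronglyMeasurable
  have hgb : ∀ x, g x ^ β ≤ 2 ^ (β - 1) * g x := by
    intro x
    rcases (hg0 x).eq_or_lt with h0 | h0
    · rw [← h0, Real.zero_rpow (by linarith : β ≠ 0)]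
      positivity
    · have e : g x ^ β = g x ^ (β - 1) * g x := by
        rw [← Real.rpow_add_one h0.ne' (β - 1)]; ring_nf
      rw [e]
      exact mul_le_mul_of_nonneg_right
        (Real.rpow_le_rpow (hg0 x) (hg2 x) (by linarith)) (hg0 x)
  have hIg : Integrable (fun x => g x ^ β) := by
    apply Integrable.mono' (hgi.const_mul (2 ^ (β - 1))) hmeas
    refine ae_of_all _ fun x => ?_
    rw [Real.norm_eq_abs, abs_of_nonneg (Real.rpow_nonneg (hg0 x) β)]
    exact hgb x
  have hIl : Integrable (fun x => gumbelPDF x ^ β) := integrable_gumbel_rpow (by linarith)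
  have hIl1 : Integrable (fun x => gumbelPDF x ^ (β - 1)) := integrable_gumbel_rpow hb1
  have hd : Integrable (fun x => |g x - gumbelPDF x|) := (hgi.sub integrable_gumbel).abs
  have hpt : ∀ x, |g x ^ β - gumbelPDF x ^ β|
      ≤ β * 2 ^ (β - 1) * (gumbelPDF x ^ (β - 1) * |g x - gumbelPDF x|
        + ε ^ (β - 1) * |g x - gumbelPDF x|) := by
    intro x
    have h1 := abs_rpow_sub_rpow_le (hg0 x) (gumbel_pos x).le hβ.le (hclose x)
    have h2 : (gumbelPDF x + ε) ^ (β - 1)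
        ≤ 2 ^ (β - 1) * (gumbelPDF x ^ (β - 1) + ε ^ (β - 1)) :=
      add_rpow_le (gumbel_pos x).le hε.le (by linarith)
    have h3 : (0 : ℝ) ≤ |g x - gumbelPDF x| := abs_nonneg _
    calc |g x ^ β - gumbelPDF x ^ β|
        ≤ β * (gumbelPDF x + ε) ^ (β - 1) * |g x - gumbelPDF x| := h1
      _ ≤ β * (2 ^ (β - 1) * (gumbelPDF x ^ (β - 1) + ε ^ (β - 1)))
            * |g x - gumbelPDF x| :=
          mul_le_mul_of_nonneg_right (mul_le_mul_of_nonneg_left h2 hβ0.le) h3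
      _ = β * 2 ^ (β - 1) * (gumbelPDF x ^ (β - 1) * |g x - gumbelPDF x|
            + ε ^ (β - 1) * |g x - gumbelPDF x|) := by ring
  have hR1 : Integrable (fun x => gumbelPDF x ^ (β - 1) * |g x - gumbelPDF x|) := by
    apply Integrable.mono' hd
    · exact (gumbel_cont.rpow_const fun x =>
        Or.inl (gumbel_pos x).ne').aestronglyMeasurable.mul hd.aestronglyMeasurable
    · refine ae_of_all _ fun x => ?_
      rw [Real.norm_eq_abs,
        abs_of_nonneg (mul_nonneg (Real.rpow_nonneg (gumbel_pos x).le _) (abs_nonneg _))]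
      exact mul_le_of_le_one_left (abs_nonneg _)
        (Real.rpow_le_one (gumbel_pos x).le (gumbel_le_one x) (by linarith))
  have hR2 : Integrable (fun x => ε ^ (β - 1) * |g x - gumbelPDF x|) := hd.const_mul _
  have h4 : |(∫ x : ℝ, g x ^ β) - ∫ x : ℝ, gumbelPDF x ^ β|
      ≤ ∫ x : ℝ, |g x ^ β - gumbelPDF x ^ β| := by
    rw [← integral_sub hIg hIl]
    have := MeasureTheory.norm_integral_le_integral_norm (μ := volume)
      (f := fun x => g x ^ β - gumbelPDF x ^ β)
    simpa [Real.norm_eq_abs] using this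
  have h5 : ∫ x : ℝ, |g x ^ β - gumbelPDF x ^ β|
      ≤ β * 2 ^ (β - 1) * ((∫ x : ℝ, gumbelPDF x ^ (β - 1) * |g x - gumbelPDF x|)
        + ε ^ (β - 1) * ∫ x : ℝ, |g x - gumbelPDF x|) := by
    have hmono := integral_mono (μ := volume) (hIg.sub hIl).abs
      (((hR1.add hR2).const_mul (β * 2 ^ (β - 1)))) hpt
    have e1 : ∫ x : ℝ, β * 2 ^ (β - 1) * (gumbelPDF x ^ (β - 1) * |g x - gumbelPDF x|
        + ε ^ (β - 1) * |g x - gumbelPDF x|)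
        = β * 2 ^ (β - 1) * ((∫ x : ℝ, gumbelPDF x ^ (β - 1) * |g x - gumbelPDF x|)
          + ε ^ (β - 1) * ∫ x : ℝ, |g x - gumbelPDF x|) := by
      rw [MeasureTheory.integral_const_mul, integral_add hR1 hR2, MeasureTheory.integral_const_mul]
    simp only [Pi.sub_apply, Pi.add_apply] at hmono
    rw [e1] at hmono
    exact hmono
  have h6 : ∫ x : ℝ, gumbelPDF x ^ (β - 1) * |g x - gumbelPDF x|
      ≤ ε * ∫ x : ℝ, gumbelPDF x ^ (β - 1) := by
    have hmono := integral_mono (μ := volume) hR1 (hIl1.mul_const ε)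
      (fun x => mul_le_mul_of_nonneg_left (hclose x) (Real.rpow_nonneg (gumbel_pos x).le _))
    rw [MeasureTheory.integral_mul_const] at hmono
    linarith [mul_comm ε (∫ x : ℝ, gumbelPDF x ^ (β - 1))]
  have h7 := l1_bound hg0 hgi hg1 hε hε1 hclose
  have hp1 : ε ^ (β - 1) ≤ 1 := Real.rpow_le_one hε.le hε1.le hb1.le
  have hp0 : 0 ≤ ε ^ (β - 1) := Real.rpow_nonneg hε.le _
  have hlog : ε ^ (β - 1) * (-Real.log ε) ≤ 1 / (β - 1) := by
    have h := Real.log_le_rpow_div (x := ε⁻¹) (by positivity) hb1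
    have hmul : ε ^ (β - 1) * (ε⁻¹) ^ (β - 1) = 1 := by
      rw [← Real.mul_rpow hε.le (by positivity), mul_inv_cancel₀ hε.ne', Real.one_rpow]
    have h2 := mul_le_mul_of_nonneg_left h hp0
    rw [Real.log_inv] at h2
    calc ε ^ (β - 1) * (-Real.log ε) ≤ ε ^ (β - 1) * ((ε⁻¹) ^ (β - 1) / (β - 1)) := h2
      _ = (ε ^ (β - 1) * (ε⁻¹) ^ (β - 1)) / (β - 1) := by ring
      _ = 1 / (β - 1) := by rw [hmul]
  have hD0 : 0 ≤ ∫ x : ℝ, |g x - gumbelPDF x| :=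
    integral_nonneg fun x => abs_nonneg _
  have h8 : ε ^ (β - 1) * ∫ x : ℝ, |g x - gumbelPDF x|
      ≤ 4 * ε + (4 / (β - 1)) * ε := by
    have h9 : ε ^ (β - 1) * ∫ x : ℝ, |g x - gumbelPDF x|
        ≤ ε ^ (β - 1) * (4 * ε * (1 - Real.log ε)) :=
      mul_le_mul_of_nonneg_left h7 hp0
    have hε4 : (0:ℝ) ≤ 4 * ε := by linarith
    calc ε ^ (β - 1) * ∫ x : ℝ, |g x - gumbelPDF x|
        ≤ ε ^ (β - 1) * (4 * ε * (1 - Real.log ε)) := h9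
      _ = 4 * ε * (ε ^ (β - 1)) + 4 * ε * (ε ^ (β - 1) * (-Real.log ε)) := by ring
      _ ≤ 4 * ε * 1 + 4 * ε * (1 / (β - 1)) :=
          add_le_add (mul_le_mul_of_nonneg_left hp1 hε4)
            (mul_le_mul_of_nonneg_left hlog hε4)
      _ = 4 * ε + (4 / (β - 1)) * ε := by ring
  have hA0 : 0 ≤ ∫ x : ℝ, gumbelPDF x ^ (β - 1) :=
    integral_nonneg fun x => Real.rpow_nonneg (gumbel_pos x).le _
  have hc0 : (0 : ℝ) < β * 2 ^ (β - 1) :=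
    mul_pos hβ0 (Real.rpow_pos_of_pos (by norm_num) _)
  calc |(∫ x : ℝ, g x ^ β) - ∫ x : ℝ, gumbelPDF x ^ β|
      ≤ β * 2 ^ (β - 1) * ((∫ x : ℝ, gumbelPDF x ^ (β - 1) * |g x - gumbelPDF x|)
        + ε ^ (β - 1) * ∫ x : ℝ, |g x - gumbelPDF x|) := h4.trans h5
    _ ≤ β * 2 ^ (β - 1) * (ε * (∫ x : ℝ, gumbelPDF x ^ (β - 1))
        + (4 * ε + (4 / (β - 1)) * ε)) := by
        apply mul_le_mul_of_nonneg_left _ hc0.le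
        exact add_le_add h6 h8
    _ = (β * 2 ^ (β - 1) * ((∫ x : ℝ, gumbelPDF x ^ (β - 1)) + 4 + 4 / (β - 1))) * ε := by
        ring

theorem stmt14 (β M : ℝ) (hβ : 1 < β) (hM : 0 < M) (g : ℕ → ℝ → ℝ)
    (hdens : ∀ n, (∀ x, 0 ≤ g n x) ∧ ∫ x : ℝ, g n x = 1)
    (hunif : TendstoUniformly g gumbelPDF atTop)
    (hbound : ∀ᶠ n in atTop, (∫ x : ℝ, |g n x - gumbelPDF x| ^ (β - 1)) ≤ M) :
    Tendsto (fun n => renyiEntropy β (g n)) atTop (nhds (renyiEntropy β gumbelPDF)) ∧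
    ∃ K : ℝ, ∀ᶠ n in atTop,
      |renyiEntropy β (g n) - renyiEntropy β gumbelPDF| ≤
        K * ⨆ x : ℝ, |g n x - gumbelPDF x| := by
  have hβ1 : 0 < β - 1 := by linarith
  have hgi : ∀ n, Integrable (g n) := by
    intro n
    by_contra h
    have h2 := (hdens n).2
    rw [MeasureTheory.integral_undef h] at h2
    norm_num at h2
  set E : ℕ → ℝ := fun n => ⨆ x : ℝ, |g n x - gumbelPDF x| with hE
  have hU : ∀ δ : ℝ, 0 < δ → ∀ᶠ n in atTop, ∀ x, |g n x - gumbelPDF x| < δ := by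
    intro δ hδ
    have h := Metric.tendstoUniformly_iff.1 hunif δ hδ
    filter_upwards [h] with n hn x
    have := hn x
    rwa [Real.dist_eq, abs_sub_comm] at this
  have hEb : ∀ᶠ n in atTop, BddAbove (Set.range fun x => |g n x - gumbelPDF x|) := by
    filter_upwards [hU 1 one_pos] with n hn
    exact ⟨1, by rintro y ⟨x, rfl⟩; exact (hn x).le⟩
  have hEle : ∀ δ : ℝ, 0 < δ → ∀ᶠ n in atTop, E n ≤ δ := by
    intro δ hδ
    filter_upwards [hU δ hδ] with n hn
    exact ciSup_le fun x => (hn x).le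
  have hE0 : ∀ n, 0 ≤ E n := fun n => Real.iSup_nonneg fun x => abs_nonneg _
  have hEptle : ∀ᶠ n in atTop, ∀ x, |g n x - gumbelPDF x| ≤ E n := by
    filter_upwards [hEb] with n hn x
    exact le_ciSup hn x
  have hEtend : Tendsto E atTop (𝓝 0) := by
    refine Metric.tendsto_nhds.2 fun δ hδ => ?_
    filter_upwards [hEle (δ / 2) (by linarith)] with n hn
    rw [Real.dist_eq, sub_zero, abs_of_nonneg (hE0 n)]
    linarith
  have hI : 0 < ∫ x : ℝ, gumbelPDF x ^ β := gumbel_rpow_integral_pos (by linarith)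
  set A := ∫ x : ℝ, gumbelPDF x ^ (β - 1) with hAdef
  have hA0 : 0 ≤ A := integral_nonneg fun x => Real.rpow_nonneg (gumbel_pos x).le _
  set K₁ := β * 2 ^ (β - 1) * (A + 4 + 4 / (β - 1)) with hK₁
  have hK₁0 : 0 < K₁ := by
    apply mul_pos (mul_pos (by linarith) (Real.rpow_pos_of_pos two_pos _))
    have h4 : (0:ℝ) < 4 / (β - 1) := by positivity
    linarith
  set I := ∫ x : ℝ, gumbelPDF x ^ β with hIdef
  set K := (1 / (β - 1)) * (2 / I) * K₁ with hK
  have hK0 : 0 ≤ K := by positivity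
  set δ₀ := min (1/2 : ℝ) (I / (2 * K₁)) with hδ₀
  have hδ₀0 : 0 < δ₀ := lt_min (by norm_num) (by positivity)
  have hkey : ∀ᶠ n in atTop,
      |renyiEntropy β (g n) - renyiEntropy β gumbelPDF| ≤ K * E n := by
    filter_upwards [hEptle, hEle δ₀ hδ₀0] with n h1 h2
    rcases (hE0 n).eq_or_lt with hz | hz
    · have hgn : g n = gumbelPDF := by
        funext x
        have hx := h1 x
        rw [← hz] at hx
        have habs0 : |g n x - gumbelPDF x| = 0 := le_antisymm hx (abs_nonneg _)
        have := abs_eq_zero.1 habs0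
        linarith
      rw [hgn, ← hz, sub_self, abs_zero, mul_zero]
    · have hε1 : E n < 1 := lt_of_le_of_lt (h2.trans (min_le_left _ _)) (by norm_num)
      have hest := main_estimate hβ (hdens n).1 (hgi n) (hdens n).2 hz hε1 h1
      set J := ∫ x : ℝ, g n x ^ β with hJ
      have hJI : |J - I| ≤ K₁ * E n := hest
      have hsmall : K₁ * E n ≤ I / 2 := by
        have h3 := h2.trans (min_le_right _ _)
        calc K₁ * E n ≤ K₁ * (I / (2 * K₁)) := mul_le_mul_of_nonneg_left h3 hK₁0.le
          _ = I / 2 := by field_simp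
      have hJpos : 0 < J := by
        have h5 := (abs_le.1 hJI).1
        linarith
      have hminJI : I / 2 ≤ min J I := by
        apply le_min _ (by linarith)
        have h5 := (abs_le.1 hJI).1
        linarith
      have hlog := abs_log_sub_log_le hJpos hI
      have hloge : |Real.log J - Real.log I| ≤ 2 / I * K₁ * E n := by
        have h3 : |J - I| / min J I ≤ (K₁ * E n) / (I / 2) :=
          div_le_div₀ (mul_nonneg hK₁0.le (hE0 n)) hJI (by linarith) hminJI
        have h4 : (K₁ * E n) / (I / 2) = 2 / I * K₁ * E n := by
          field_simp
        rw [h4] at h3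
        linarith
      have hren : renyiEntropy β (g n) - renyiEntropy β gumbelPDF
          = (1 / (1 - β)) * (Real.log J - Real.log I) := by
        unfold renyiEntropy
        rw [← hJ, ← hIdef]
        ring
      rw [hren, abs_mul]
      have habs : |1 / (1 - β)| = 1 / (β - 1) := by
        rw [abs_div, abs_one, abs_of_neg (by linarith : (1:ℝ) - β < 0)]
        ring_nf
      rw [habs]
      calc 1 / (β - 1) * |Real.log J - Real.log I|
          ≤ 1 / (β - 1) * (2 / I * K₁ * E n) :=
            mul_le_mul_of_nonneg_left hloge (by positivity)
        _ = K * E n := by rw [hK]; ring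
  constructor
  · have hdiff : Tendsto (fun n => renyiEntropy β (g n) - renyiEntropy β gumbelPDF)
        atTop (𝓝 0) := by
      apply squeeze_zero_norm' (a := fun n => K * E n)
      · filter_upwards [hkey] with n hn
        rwa [Real.norm_eq_abs]
      · simpa using hEtend.const_mul K
    have := hdiff.add_const (renyiEntropy β gumbelPDF)
    simpa using this
  · exact ⟨K, hkey⟩
end
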